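/- Define s: ℕ → ℕ by s(w) = (q−1)q^{w−1} for 1 ≤ w < q, s(q) = (q−1)(q^{q−1}−1), and s(w) = (q−1)(s(w−1)+⋯+s(w−q+1)) + s(w−q) for w > q (with s(0)=1 by convention in the recursion). Then s(w) equals the number of pairs ((s_1,…,s_n),(ε_1,…,ε_n)) where (s_1,…,s_n) is a tuple of positive integers of weight w with q ∤ s_i for all i, and each ε_i ∈ F_q^×. -/

import Mathlib

private lemma geom_range (q : ℕ) (hq : 1 ≤ q) (n : ℕ) :
    ∑ i ∈ Finset.range n, (q - 1) * q ^ i = q ^ n - 1 := by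
  induction n with
  | zero => simp
  | succ n ih =>
    rw [Finset.sum_range_succ, ih, pow_succ]
    have h1 : 1 ≤ q ^ n := Nat.one_le_pow _ _ (by omega)
    have h2 : (q - 1) * q ^ n = q * q ^ n - q ^ n := by
      rw [Nat.sub_mul, one_mul]
    have h3 : q ^ n ≤ q * q ^ n := Nat.le_mul_of_pos_left _ (by omega)
    have h4 : q ^ n * q = q * q ^ n := by ring
    omega

private lemma geom_Icc (q : ℕ) (hq : 1 ≤ q) (n : ℕ) :
    ∑ m ∈ Finset.Icc 1 n, (q - 1) * q ^ (m - 1) = q ^ n - 1 := by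
  rw [← Finset.Ico_add_one_right_eq_Icc, Finset.sum_Ico_eq_sum_range]
  simp only [Nat.add_sub_cancel_left, Nat.add_sub_cancel]
  exact geom_range q hq n

private def G (q : ℕ) : ℕ → ℕ
  | 0 => 1
  | (w+1) =>
    ∑ a ∈ ((Finset.Icc 1 (w+1)).filter fun a => ¬ q ∣ a).attach,
      (q - 1) * G q (w + 1 - a.1)
  decreasing_by
    have := a.2
    simp only [Finset.mem_filter, Finset.mem_Icc] at this
    omega

private lemma G_succ (q w : ℕ) :
    G q (w+1) = ∑ a ∈ (Finset.Icc 1 (w+1)).filter (fun a => ¬ q ∣ a),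
      (q - 1) * G q (w + 1 - a) := by
  rw [G]
  exact Finset.sum_attach _ (fun a => (q - 1) * G q (w + 1 - a))

private lemma G_small (q : ℕ) (hq : 2 ≤ q) :
    ∀ w, 1 ≤ w → w < q → G q w = (q - 1) * q ^ (w - 1) := by
  intro w
  induction w using Nat.strong_induction_on with
  | _ w ih =>
    intro hw1 hwq
    obtain ⟨v, rfl⟩ : ∃ v, w = v + 1 := ⟨w - 1, by omega⟩
    rw [G_succ]
    have hfil : (Finset.Icc 1 (v+1)).filter (fun a => ¬ q ∣ a) = Finset.Icc 1 (v+1) := by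
      apply Finset.filter_true_of_mem
      intro a ha hd
      simp only [Finset.mem_Icc] at ha
      have := Nat.le_of_dvd (by omega) hd
      omega
    rw [hfil, ← Finset.Ico_add_one_right_eq_Icc, Finset.sum_Ico_eq_sum_range]
    simp only [Nat.add_sub_cancel, Nat.succ_sub_one]
    have hre : ∀ i ∈ Finset.range (v+1),
        (q - 1) * G q (v + 1 - (1 + i)) = (q - 1) * G q (v - i) := by
      intro i hi
      have h : v + 1 - (1 + i) = v - i := by omega
      rw [h]
    rw [Finset.sum_congr rfl hre]
    have hrefl := Finset.sum_range_reflect (fun j => (q - 1) * G q j) (v + 1)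
    simp only [Nat.add_sub_cancel] at hrefl
    rw [hrefl, Finset.sum_range_succ']
    have hterm : ∀ i ∈ Finset.range v,
        (q - 1) * G q (i + 1) = (q - 1) * ((q - 1) * q ^ i) := by
      intro i hi
      simp only [Finset.mem_range] at hi
      rw [ih (i+1) (by omega) (by omega) (by omega)]
      simp
    rw [Finset.sum_congr rfl hterm]
    have : ∑ i ∈ Finset.range v, (q - 1) * ((q - 1) * q ^ i)
        = (q - 1) * ∑ i ∈ Finset.range v, (q - 1) * q ^ i := by
      rw [Finset.mul_sum]
    rw [this, geom_range q (by omega), G]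
    have h1 : 1 ≤ q ^ v := Nat.one_le_pow _ _ (by omega)
    have h2 : (q - 1) * (q ^ v - 1) = (q - 1) * q ^ v - (q - 1) := by
      rw [Nat.mul_sub, mul_one]
    have h3 : (q - 1) * 1 = q - 1 := by ring
    have h4 : q - 1 ≤ (q - 1) * q ^ v := Nat.le_mul_of_pos_right _ (by omega)
    omega

private lemma G_q (q : ℕ) (hq : 2 ≤ q) : G q q = (q - 1) * (q ^ (q - 1) - 1) := by
  obtain ⟨v, hv⟩ : ∃ v, q = v + 1 := ⟨q - 1, by omega⟩
  rw [hv, G_succ, ← hv]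
  have hfil : (Finset.Icc 1 q).filter (fun a => ¬ q ∣ a) = Finset.Icc 1 (q - 1) := by
    ext a
    simp only [Finset.mem_filter, Finset.mem_Icc]
    constructor
    · rintro ⟨⟨h1, h2⟩, h3⟩
      refine ⟨h1, ?_⟩
      rcases Nat.lt_or_ge a q with h | h
      · omega
      · exact absurd (show q ∣ a by
          have h' : a = q := by omega
          rw [h']) h3
    · rintro ⟨h1, h2⟩
      refine ⟨⟨h1, by omega⟩, fun hd => ?_⟩
      have := Nat.le_of_dvd (by omega) hd
      omega
  rw [hfil]
  have hsum : ∑ a ∈ Finset.Icc 1 (q - 1), (q - 1) * G q (q - a)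
      = ∑ m ∈ Finset.Icc 1 (q - 1), (q - 1) * G q m := by
    refine Finset.sum_nbij' (fun a => q - a) (fun m => q - m) ?_ ?_ ?_ ?_ ?_
    · intro a ha; simp only [Finset.mem_Icc] at *; omega
    · intro a ha; simp only [Finset.mem_Icc] at *; omega
    · intro a ha; simp only [Finset.mem_Icc] at ha; show q - (q - a) = a; omega
    · intro a ha; simp only [Finset.mem_Icc] at ha; show q - (q - a) = a; omega
    · intro a ha; rfl
  rw [hsum]
  have hterm : ∀ m ∈ Finset.Icc 1 (q - 1),
      (q - 1) * G q m = (q - 1) * ((q - 1) * q ^ (m - 1)) := by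
    intro m hm
    simp only [Finset.mem_Icc] at hm
    rw [G_small q hq m (by omega) (by omega)]
  rw [Finset.sum_congr rfl hterm, ← Finset.mul_sum, geom_Icc q (by omega)]

private lemma G_rec (q : ℕ) (hq : 2 ≤ q) (w : ℕ) (hw : q < w) :
    G q w = (q - 1) * ∑ i ∈ Finset.Icc 1 (q - 1), G q (w - i) + G q (w - q) := by
  obtain ⟨v, hv⟩ : ∃ v, w = v + 1 := ⟨w - 1, by omega⟩
  rw [hv, G_succ, ← hv]
  have hsplit : (Finset.Icc 1 w).filter (fun a => ¬ q ∣ a)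
      = Finset.Icc 1 (q - 1) ∪
        (((Finset.Icc 1 (w - q)).filter (fun a => ¬ q ∣ a)).image (· + q)) := by
    ext a
    simp only [Finset.mem_union, Finset.mem_filter, Finset.mem_Icc, Finset.mem_image]
    constructor
    · rintro ⟨⟨h1, h2⟩, h3⟩
      rcases Nat.lt_or_ge a q with h | h
      · left; omega
      · right
        have hne : a ≠ q := fun he => h3 (he ▸ dvd_refl q)
        refine ⟨a - q, ⟨⟨by omega, by omega⟩, fun hd => h3 ?_⟩, by omega⟩
        obtain ⟨c, hc⟩ := hd
        exact ⟨c + 1, by rw [Nat.mul_add, mul_one]; omega⟩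
    · rintro (⟨h1, h2⟩ | ⟨b, ⟨⟨h1, h2⟩, h3⟩, rfl⟩)
      · exact ⟨⟨h1, by omega⟩, fun hd => by
          have := Nat.le_of_dvd (by omega) hd; omega⟩
      · refine ⟨⟨by omega, by omega⟩, fun hd => h3 ?_⟩
        simpa using Nat.dvd_sub hd (dvd_refl q)
  have hdisj : Disjoint (Finset.Icc 1 (q - 1))
      (((Finset.Icc 1 (w - q)).filter (fun a => ¬ q ∣ a)).image (· + q)) := by
    rw [Finset.disjoint_left]
    intro a ha hb
    simp only [Finset.mem_Icc] at ha
    simp only [Finset.mem_image, Finset.mem_filter, Finset.mem_Icc] at hb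
    obtain ⟨b, _, rfl⟩ := hb
    omega
  rw [hsplit, Finset.sum_union hdisj, Finset.sum_image (by intro x _ y _ h; simp only at h; omega)]
  congr 1
  · rw [Finset.mul_sum]
  · obtain ⟨u, hu⟩ : ∃ u, w - q = u + 1 := ⟨w - q - 1, by omega⟩
    rw [hu, G_succ, ← hu]
    apply Finset.sum_congr rfl
    intro a ha
    have h : w - (a + q) = w - q - a := by omega
    rw [h]

private lemma G_eq_s (q : ℕ) (hq : 2 ≤ q) (s : ℕ → ℕ)
    (hs1 : ∀ w, 1 ≤ w → w < q → s w = (q - 1) * q ^ (w - 1))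
    (hsq : s q = (q - 1) * (q ^ (q - 1) - 1))
    (hsrec : ∀ w, q < w →
      s w = (q - 1) * ∑ i ∈ Finset.Icc 1 (q - 1), s (w - i) + s (w - q)) :
    ∀ w, 1 ≤ w → G q w = s w := by
  intro w
  induction w using Nat.strong_induction_on with
  | _ w ih =>
    intro hw
    rcases Nat.lt_or_ge w q with h | h
    · rw [G_small q hq w hw h, hs1 w hw h]
    · rcases Nat.eq_or_lt_of_le h with rfl | h
      · rw [G_q q hq, hsq]
      · rw [G_rec q hq w h, hsrec w h]
        congr 1
        · congr 1
          apply Finset.sum_congr rfl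
          intro i hi
          simp only [Finset.mem_Icc] at hi
          exact ih (w - i) (by omega) (by omega)
        · exact ih (w - q) (by omega) (by omega)

private lemma ncard_biUnion {α β : Type*} [DecidableEq α] (t : Finset α) (f : α → Set β)
    (hf : ∀ a ∈ t, (f a).Finite)
    (hd : ∀ a ∈ t, ∀ b ∈ t, a ≠ b → Disjoint (f a) (f b)) :
    (⋃ a ∈ t, f a).ncard = ∑ a ∈ t, (f a).ncard := by
  induction t using Finset.induction_on with
  | empty => simp
  | @insert a s ha ih =>
    rw [Finset.set_biUnion_insert, Finset.sum_insert ha,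
      Set.ncard_union_eq ?_ (hf a (Finset.mem_insert_self a s)) ?_,
      ih (fun b hb => hf b (Finset.mem_insert_of_mem hb))
        (fun b hb c hc h => hd b (Finset.mem_insert_of_mem hb) c (Finset.mem_insert_of_mem hc) h)]
    · rw [Set.disjoint_iUnion_right]
      intro i
      rw [Set.disjoint_iUnion_right]
      intro hi
      exact hd a (Finset.mem_insert_self a s) i (Finset.mem_insert_of_mem hi)
        (fun h => ha (h ▸ hi))
    · exact Set.Finite.biUnion (Set.finite_mem_finset s)
        (fun b hb => hf b (Finset.mem_insert_of_mem hb))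

private def SS (q : ℕ) (w : ℕ) : Set (List ℕ × List (Fin (q - 1))) :=
  {p | p.2.length = p.1.length ∧ (∀ x ∈ p.1, 0 < x) ∧ p.1.sum = w ∧ ∀ x ∈ p.1, ¬ q ∣ x}

private lemma SS_card (q : ℕ) (hq : 2 ≤ q) :
    ∀ w, (SS q w).Finite ∧ (SS q w).ncard = G q w := by
  intro w
  induction w using Nat.strong_induction_on with
  | _ w ih =>
    rcases Nat.eq_zero_or_pos w with rfl | hw
    · have hS : SS q 0 = {(([] : List ℕ), ([] : List (Fin (q - 1))))} := by
        ext ⟨l1, l2⟩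
        simp only [SS, Set.mem_setOf_eq, Set.mem_singleton_iff, Prod.mk.injEq]
        constructor
        · rintro ⟨hlen, hpos, hsum, _⟩
          have h1 : l1 = [] := by
            by_contra h
            exact absurd hsum (by have := List.sum_pos l1 hpos h; omega)
          subst h1
          simp only [List.length_nil, List.length_eq_zero_iff] at hlen
          exact ⟨rfl, hlen⟩
        · rintro ⟨rfl, rfl⟩
          simp
      rw [hS]
      refine ⟨Set.finite_singleton _, ?_⟩
      rw [Set.ncard_singleton, G]
    · obtain ⟨v, hv⟩ : ∃ v, w = v + 1 := ⟨w - 1, by omega⟩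
      set A : Finset (ℕ × Fin (q - 1)) :=
        ((Finset.Icc 1 w).filter fun a => ¬ q ∣ a) ×ˢ Finset.univ with hA
      have hunion : SS q w = ⋃ x ∈ A, (fun p : List ℕ × List (Fin (q - 1)) =>
          (x.1 :: p.1, x.2 :: p.2)) '' SS q (w - x.1) := by
        ext ⟨l1, l2⟩
        simp only [SS, Set.mem_setOf_eq, Set.mem_iUnion, Set.mem_image, Prod.mk.injEq,
          Prod.exists, hA, Finset.mem_product, Finset.mem_filter, Finset.mem_Icc,
          Finset.mem_univ, and_true]
        constructor
        · rintro ⟨hlen, hpos, hsum, hdvd⟩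
          match l1, l2 with
          | [], _ => simp at hsum; omega
          | a :: t1, [] => simp at hlen
          | a :: t1, e :: t2 =>
            refine ⟨a, e, ⟨⟨hpos a (by simp), ?_⟩, hdvd a (by simp)⟩,
              t1, t2, ⟨?_, ?_, ?_, ?_⟩, rfl, rfl⟩
            · simp only [List.sum_cons] at hsum; omega
            · simpa using hlen
            · exact fun x hx => hpos x (by simp [hx])
            · simp only [List.sum_cons] at hsum; omega
            · exact fun x hx => hdvd x (by simp [hx])
        · rintro ⟨a, e, ⟨⟨ha1, ha2⟩, hadvd⟩, t1, t2, ⟨hlen, hpos, hsum, hdvd⟩, rfl, rfl⟩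
          refine ⟨by simpa using hlen, ?_, ?_, ?_⟩
          · intro x hx
            rcases List.mem_cons.mp hx with rfl | hx
            · omega
            · exact hpos x hx
          · simp only [List.sum_cons, hsum]; omega
          · intro x hx
            rcases List.mem_cons.mp hx with rfl | hx
            · exact hadvd
            · exact hdvd x hx
      have hmemA : ∀ x ∈ A, w - x.1 < w := by
        intro x hx
        simp only [hA, Finset.mem_product, Finset.mem_filter, Finset.mem_Icc] at hx
        omega
      have hfin : ∀ x ∈ A, ((fun p : List ℕ × List (Fin (q - 1)) =>
          (x.1 :: p.1, x.2 :: p.2)) '' SS q (w - x.1)).Finite :=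
        fun x hx => Set.Finite.image _ (ih (w - x.1) (hmemA x hx)).1
      have hinj : ∀ x : ℕ × Fin (q - 1), Function.Injective
          (fun p : List ℕ × List (Fin (q - 1)) => (x.1 :: p.1, x.2 :: p.2)) := by
        intro x ⟨a1, a2⟩ ⟨b1, b2⟩ h
        simp only [Prod.mk.injEq, List.cons.injEq] at h
        exact Prod.ext h.1.2 h.2.2
      have hd : ∀ x ∈ A, ∀ y ∈ A, x ≠ y →
          Disjoint ((fun p : List ℕ × List (Fin (q - 1)) =>
            (x.1 :: p.1, x.2 :: p.2)) '' SS q (w - x.1))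
          ((fun p : List ℕ × List (Fin (q - 1)) =>
            (y.1 :: p.1, y.2 :: p.2)) '' SS q (w - y.1)) := by
        intro x _ y _ hxy
        rw [Set.disjoint_left]
        rintro z ⟨p1, _, rfl⟩ ⟨p2, _, heq⟩
        simp only [Prod.mk.injEq, List.cons.injEq] at heq
        exact hxy (Prod.ext heq.1.1.symm heq.2.1.symm)
      constructor
      · rw [hunion]
        exact Set.Finite.biUnion (Set.finite_mem_finset A) hfin
      · rw [hunion, ncard_biUnion A _ hfin hd]
        have hterm : ∀ x ∈ A, ((fun p : List ℕ × List (Fin (q - 1)) =>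
            (x.1 :: p.1, x.2 :: p.2)) '' SS q (w - x.1)).ncard = G q (w - x.1) := by
          intro x hx
          rw [Set.ncard_image_of_injective _ (hinj x), (ih (w - x.1) (hmemA x hx)).2]
        rw [Finset.sum_congr rfl hterm, hA, Finset.sum_product]
        simp only [Finset.sum_const, Finset.card_univ, Fintype.card_fin, smul_eq_mul]
        rw [hv, G_succ]

theorem stmt5 (q : ℕ) (hq : 2 ≤ q) (s : ℕ → ℕ)
    (hs0 : s 0 = 1)
    (hs1 : ∀ w, 1 ≤ w → w < q → s w = (q - 1) * q ^ (w - 1))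
    (hsq : s q = (q - 1) * (q ^ (q - 1) - 1))
    (hsrec : ∀ w, q < w →
      s w = (q - 1) * ∑ i ∈ Finset.Icc 1 (q - 1), s (w - i) + s (w - q)) :
    ∀ w, 1 ≤ w →
      {p : List ℕ × List (Fin (q - 1)) |
        p.1 ≠ [] ∧ p.2.length = p.1.length ∧ (∀ x ∈ p.1, 0 < x) ∧
        p.1.sum = w ∧ ∀ x ∈ p.1, ¬ q ∣ x}.ncard = s w := by
  intro w hw
  have hset : {p : List ℕ × List (Fin (q - 1)) |
      p.1 ≠ [] ∧ p.2.length = p.1.length ∧ (∀ x ∈ p.1, 0 < x) ∧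
      p.1.sum = w ∧ ∀ x ∈ p.1, ¬ q ∣ x} = SS q w := by
    ext p
    simp only [SS, Set.mem_setOf_eq]
    constructor
    · rintro ⟨_, h⟩; exact h
    · rintro ⟨h1, h2, h3, h4⟩
      refine ⟨?_, h1, h2, h3, h4⟩
      intro hnil
      rw [hnil] at h3
      simp at h3
      omega
  rw [hset, (SS_card q hq w).2, G_eq_s q hq s hs1 hsq hsrec w hw]
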